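/- Let F be a saturated fusion system on a finite 2-group S, and suppose M is a maximal subgroup of S that is abelian. Then v_M ∈ B(F)^× if and only if M is normal in F; and in this case the only possible F-essential subgroups of S are M and/or S. -/

import Mathlib

namespace BurnsideFusion

/-! ### The Burnside ring, realized via marks inside the ghost ring -/

/-- The vector of marks of the transitive `G`-set `G/K`:
its value at `H ≤ G` is the number of `H`-fixed points of `G/K`. -/
noncomputable def markVector (G : Type*) [Group G] (K : Subgroup G) : Subgroup G → ℤ :=
  fun H => (Nat.card {x : G ⧸ K // ∀ h : G, h ∈ H → h • x = x} : ℤ)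

/-- The Burnside ring of `G`, realized (faithfully, via the injective mark homomorphism)
as the subring of the ghost ring `∏_{H ≤ G} ℤ` generated by the marks of the
transitive `G`-sets `G/K`.  The mark of an element `a` at `H` is just `a H`. -/
noncomputable def burnsideRing (G : Type*) [Group G] : Subring (Subgroup G → ℤ) :=
  Subring.closure (Set.range (markVector G))

/-- The unit group `B(G)^×` of the Burnside ring, as a set:
since every unit of `B(G)` has all marks `±1`, the units are exactly the
elements squaring to `1`. -/
def burnsideUnits (G : Type*) [Group G] : Set (Subgroup G → ℤ) :=
  {b | b ∈ burnsideRing G ∧ b * b = 1}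

/-- Restriction `B(G) → B(S)` for `S ≤ G`, on marks:
`(n_H)_{H ≤ G} ↦ (n_P)_{P ≤ S}`. -/
def resMark {G : Type*} [Group G] (S : Subgroup G) (b : Subgroup G → ℤ) :
    Subgroup ↥S → ℤ :=
  fun P => b (P.map S.subtype)

/-- The action of a (bijective) endomorphism `f` of `G` on the ghost ring, on marks:
`(f · b)_Q = b_{f⁻¹(Q)}`. -/
def autAct {G : Type*} [Group G] (f : G →* G) (b : Subgroup G → ℤ) : Subgroup G → ℤ :=
  fun Q => b (Q.comap f)

/-- The elements of the Burnside ring fixed by a set `A` of automorphisms of `G`.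
(For `A = Aut_F(P)` this is `B(P)^{Out_F(P)}`, since the inner automorphisms
act trivially on `B(P)`.) -/
def fixedBurnside (G : Type*) [Group G] (A : Set (MulAut G)) : Set (Subgroup G → ℤ) :=
  {b | b ∈ burnsideRing G ∧ ∀ α ∈ A, autAct α.toMonoidHom b = b}

/-- The units of the Burnside ring fixed by a set `A` of automorphisms of `G`. -/
def fixedUnits (G : Type*) [Group G] (A : Set (MulAut G)) : Set (Subgroup G → ℤ) :=
  {b | b ∈ burnsideUnits G ∧ ∀ α ∈ A, autAct α.toMonoidHom b = b}

/-- The relative trace map `tr^Γ_Δ` on the (units of the) Burnside ring: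
the product of `α · b` over a set of representatives `α` of the cosets `Γ/Δ`. -/
noncomputable def relTrace {G : Type*} [Group G] (Γ Δ : Subgroup (MulAut G))
    (b : Subgroup G → ℤ) : Subgroup G → ℤ :=
  ∏ᶠ c : ↥Γ ⧸ Δ.subgroupOf Γ, autAct ((Quotient.out c : ↥Γ) : MulAut G).toMonoidHom b

/-! ### Fusion systems -/

/-- The homomorphism `P → Q` induced by conjugation by `s`. -/
def conjMap {S : Type*} [Group S] (s : S) (P Q : Subgroup S)
    (h : ∀ x ∈ P, s * x * s⁻¹ ∈ Q) : ↥P →* ↥Q where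
  toFun x := ⟨s * ↑x * s⁻¹, h x x.2⟩
  map_one' := by ext; simp
  map_mul' x y := by ext; simp

/-- A fusion system `F` on a group `S`: a category whose objects are the subgroups
of `S` and whose morphisms are injective group homomorphisms, containing all the
homomorphisms induced by conjugation in `S`, and such that every morphism factors
as an isomorphism in `F` followed by an inclusion. -/
structure FusionSystem (S : Type*) [Group S] where
  /-- The set of `F`-morphisms `P → Q`. -/
  Hom : ∀ P Q : Subgroup S, Set (↥P →* ↥Q)
  /-- All morphisms are injective. -/
  inj : ∀ {P Q : Subgroup S} {f : ↥P →* ↥Q}, f ∈ Hom P Q → Function.Injective f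
  /-- `Hom_S(P,Q) ⊆ Hom_F(P,Q)`. -/
  conj_mem : ∀ (s : S) (P Q : Subgroup S) (h : ∀ x ∈ P, s * x * s⁻¹ ∈ Q),
    conjMap s P Q h ∈ Hom P Q
  /-- Morphisms compose. -/
  comp_mem : ∀ {P Q R : Subgroup S} {f : ↥P →* ↥Q} {g : ↥Q →* ↥R},
    f ∈ Hom P Q → g ∈ Hom Q R → g.comp f ∈ Hom P R
  /-- Every morphism factors as an isomorphism in `F` onto its image followed by an
  inclusion. -/
  factor_mem : ∀ {P Q : Subgroup S} {f : ↥P →* ↥Q}, f ∈ Hom P Q →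
    ∃ (R : Subgroup S) (_ : R ≤ Q) (e : ↥P ≃* ↥R), e.toMonoidHom ∈ Hom P R ∧
      ∀ x : ↥P, ((e x : ↥R) : S) = ((f x : ↥Q) : S)
  /-- Isomorphisms in `F` are invertible in `F`. -/
  isoinv_mem : ∀ {P Q : Subgroup S} (e : ↥P ≃* ↥Q),
    e.toMonoidHom ∈ Hom P Q → e.symm.toMonoidHom ∈ Hom Q P

namespace FusionSystem

variable {S : Type*} [Group S] (F : FusionSystem S)

/-- Two subgroups of `S` are `F`-conjugate (isomorphic in `F`). -/
def SubConj (P Q : Subgroup S) : Prop :=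
  ∃ f ∈ F.Hom P Q, Function.Surjective ⇑f

/-- Two elements of `S` are `F`-conjugate: some `F`-isomorphism `⟨x⟩ → ⟨y⟩` sends
`x` to `y`. -/
def ElemConj (x y : S) : Prop :=
  ∃ f ∈ F.Hom (Subgroup.zpowers x) (Subgroup.zpowers y),
    f ⟨x, Subgroup.mem_zpowers x⟩ = ⟨y, Subgroup.mem_zpowers y⟩

/-- A subgroup `P ≤ S` is strongly closed in `F` if the `F`-conjugacy class of every
element of `P` is contained in `P`. -/
def StronglyClosed (P : Subgroup S) : Prop :=
  ∀ x ∈ P, ∀ y : S, F.ElemConj x y → y ∈ P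

/-- A subgroup `P` is normal in `F`: every morphism `φ ∈ Hom_F(Q,R)` extends to a
morphism `ψ ∈ Hom_F(QP, RP)` with `ψ|_Q = φ` and `ψ(P) = P`. -/
def NormalIn (P : Subgroup S) : Prop :=
  ∀ (Q R : Subgroup S), ∀ φ ∈ F.Hom Q R,
    ∃ ψ ∈ F.Hom (Q ⊔ P) (R ⊔ P),
      (∀ (x : S) (hx : x ∈ Q),
        ((ψ ⟨x, Subgroup.mem_sup_left hx⟩ : ↥(R ⊔ P)) : S) = ((φ ⟨x, hx⟩ : ↥R) : S)) ∧
      (∀ (x : S) (hx : x ∈ P),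
        ((ψ ⟨x, Subgroup.mem_sup_right hx⟩ : ↥(R ⊔ P)) : S) ∈ P) ∧
      (∀ y ∈ P, ∃ (x : S) (hx : x ∈ P),
        ((ψ ⟨x, Subgroup.mem_sup_right hx⟩ : ↥(R ⊔ P)) : S) = y)

/-- `Aut_F(P)`: the group of `F`-automorphisms of `P`. -/
def AutF (P : Subgroup S) : Subgroup (MulAut ↥P) where
  carrier := {α | α.toMonoidHom ∈ F.Hom P P}
  one_mem' := by
    have h : ∀ x ∈ P, (1 : S) * x * (1 : S)⁻¹ ∈ P := fun x hx => by simpa using hx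
    have h1 := F.conj_mem 1 P P h
    have e : conjMap (1 : S) P P h = (1 : MulAut ↥P).toMonoidHom := by
      ext x; simp [conjMap]
    rwa [e] at h1
  mul_mem' := by
    intro α β hα hβ
    have h := F.comp_mem hβ hα
    have e : α.toMonoidHom.comp β.toMonoidHom = (α * β).toMonoidHom := rfl
    rwa [e] at h
  inv_mem' := by
    intro α hα
    exact F.isoinv_mem α hα

end FusionSystem

/-- The conjugation automorphism of `P` induced by an element of its normalizer. -/
def conjAut {S : Type*} [Group S] (P : Subgroup S) (s : ↥(Subgroup.normalizer (P : Set S))) : MulAut ↥P where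
  toFun x := ⟨(s : S) * ↑x * (s : S)⁻¹, (Subgroup.mem_normalizer_iff.mp s.2 ↑x).mp x.2⟩
  invFun x := ⟨(s : S)⁻¹ * ↑x * (s : S), by
    have h := (Subgroup.mem_normalizer_iff.mp ((Subgroup.normalizer (P : Set S)).inv_mem s.2) (↑x : S)).mp x.2
    simpa using h⟩
  left_inv x := by ext; simp; group
  right_inv x := by ext; simp; group
  map_mul' x y := by ext; simp

/-- The homomorphism `N_S(P) → Aut(P)` given by conjugation. -/
def conjAutHom {S : Type*} [Group S] (P : Subgroup S) : ↥(Subgroup.normalizer (P : Set S)) →* MulAut ↥P where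
  toFun := conjAut P
  map_one' := by ext x; simp [conjAut]
  map_mul' s t := by ext x; simp [conjAut]; group

/-- `Aut_S(P)`: the subgroup of `Aut(P)` of automorphisms induced by conjugation in `S`. -/
def AutS {S : Type*} [Group S] (P : Subgroup S) : Subgroup (MulAut ↥P) :=
  (conjAutHom P).range

end BurnsideFusion

namespace BurnsideFusion

variable {S : Type*} [Group S]

/-- The automorphism of `⊤ ≤ S` induced by an automorphism of `S`. -/
def topRestrict (α : MulAut S) : MulAut ↥(⊤ : Subgroup S) :=
  (Subgroup.topEquiv.trans α).trans Subgroup.topEquiv.symm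

theorem topRestrict_one : topRestrict (1 : MulAut S) = 1 := by
  ext x; simp [topRestrict]

theorem topRestrict_mul (α β : MulAut S) :
    topRestrict (α * β) = topRestrict α * topRestrict β := by
  ext x; simp [topRestrict]

theorem topRestrict_inv (α : MulAut S) :
    topRestrict α⁻¹ = (topRestrict α).symm := by
  ext x; simp [topRestrict, MulAut.inv_def]

/-- `Aut_F(S)`, realized as a subgroup of `Aut(S)`. -/
def FusionSystem.AutFS (F : FusionSystem S) : Subgroup (MulAut S) where
  carrier := {α | (topRestrict α).toMonoidHom ∈ F.Hom ⊤ ⊤}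
  one_mem' := by
    have h := (F.AutF ⊤).one_mem
    have h' : (1 : MulAut ↥(⊤ : Subgroup S)).toMonoidHom ∈ F.Hom ⊤ ⊤ := h
    simpa [Set.mem_setOf_eq, topRestrict_one] using h'
  mul_mem' := by
    intro α β hα hβ
    have h := F.comp_mem (hβ : (topRestrict β).toMonoidHom ∈ F.Hom ⊤ ⊤) hα
    have e : (topRestrict α).toMonoidHom.comp (topRestrict β).toMonoidHom
        = (topRestrict (α * β)).toMonoidHom := by
      rw [topRestrict_mul]; rfl
    rw [e] at h; exact h
  inv_mem' := by
    intro α hα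
    have h := F.isoinv_mem (topRestrict α) hα
    simpa [Set.mem_setOf_eq, topRestrict_inv] using h

end BurnsideFusion

namespace BurnsideFusion

variable {S : Type*} [Group S]

namespace FusionSystem

variable (F : FusionSystem S)

/-- `P` is fully normalized in `F`: its normalizer has maximal order in its
`F`-conjugacy class. -/
def FullyNormalized (P : Subgroup S) : Prop :=
  ∀ Q : Subgroup S, F.SubConj P Q → Nat.card ↥(Subgroup.normalizer (Q : Set S)) ≤ Nat.card ↥(Subgroup.normalizer (P : Set S))

/-- `P` is fully centralized in `F`: its centralizer has maximal order in its
`F`-conjugacy class. -/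
def FullyCentralized (P : Subgroup S) : Prop :=
  ∀ Q : Subgroup S, F.SubConj P Q →
    Nat.card ↥(Subgroup.centralizer (Q : Set S)) ≤ Nat.card ↥(Subgroup.centralizer (P : Set S))

/-- `P` is `F`-centric: every `F`-conjugate `Q` of `P` satisfies `C_S(Q) ≤ Q`. -/
def Centric (P : Subgroup S) : Prop :=
  ∀ Q : Subgroup S, F.SubConj P Q → Subgroup.centralizer (Q : Set S) ≤ Q

/-- `P` is fully `F`-automized: `Aut_S(P)` is a Sylow `p`-subgroup of `Aut_F(P)`. -/
def FullyAutomized (p : ℕ) (P : Subgroup S) : Prop :=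
  AutS P ≤ F.AutF P ∧ IsPGroup p ↥((AutS P).subgroupOf (F.AutF P)) ∧
    ¬ p ∣ ((AutS P).subgroupOf (F.AutF P)).index

end FusionSystem

/-- For an `F`-isomorphism `φ : P → Q`, the subset
`N_φ = { g ∈ N_S(P) | φ ∘ c_g ∘ φ⁻¹ ∈ Aut_S(Q) }` of `S`. -/
def NphiSet (P Q : Subgroup S) (φ : ↥P ≃* ↥Q) : Set S :=
  {g | ∃ hg : g ∈ Subgroup.normalizer (P : Set S), ∃ h : S, ∀ (x : S) (hx : x ∈ P),
    ((φ ⟨g * x * g⁻¹, (Subgroup.mem_normalizer_iff.mp hg x).mp hx⟩ : ↥Q) : S)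
      = h * ((φ ⟨x, hx⟩ : ↥Q) : S) * h⁻¹}

namespace FusionSystem

variable (F : FusionSystem S)

/-- `Q` is receptive in `F`: every `F`-isomorphism `φ : P → Q` extends to a morphism
in `F` defined on `N_φ`. -/
def Receptive (Q : Subgroup S) : Prop :=
  ∀ (P : Subgroup S) (φ : ↥P ≃* ↥Q), φ.toMonoidHom ∈ F.Hom P Q →
    ∃ T : Subgroup S, (T : Set S) = NphiSet P Q φ ∧
      ∃ ψ ∈ F.Hom T ⊤, ∀ (x : S) (hx : x ∈ P) (hx' : x ∈ T),
        ((ψ ⟨x, hx'⟩ : ↥(⊤ : Subgroup S)) : S) = ((φ ⟨x, hx⟩ : ↥Q) : S)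

/-- `F` is saturated: every `F`-conjugacy class of subgroups contains a fully
automized, receptive member. -/
def IsSaturated (p : ℕ) : Prop :=
  ∀ P : Subgroup S, ∃ Q : Subgroup S, F.SubConj P Q ∧ F.FullyAutomized p Q ∧ F.Receptive Q

end FusionSystem

theorem innRange_subgroupOf_normal (F : FusionSystem S) (P : Subgroup S) :
    (((MulAut.conj : ↥P →* MulAut ↥P).range).subgroupOf (F.AutF P)).Normal := by
  have h : ((MulAut.conj : ↥P →* MulAut ↥P).range).Normal := by
    constructor
    intro n hn g
    obtain ⟨x, rfl⟩ := hn
    refine ⟨g x, ?_⟩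
    ext y
    simp [MulAut.conj_apply, MulAut.inv_def, mul_assoc]
  exact h.subgroupOf _

/-- `Out_F(P) = Aut_F(P)/Inn(P)`. -/
def OutF (F : FusionSystem S) (P : Subgroup S) : Type _ :=
  ↥(F.AutF P) ⧸ ((MulAut.conj : ↥P →* MulAut ↥P).range.subgroupOf (F.AutF P))

noncomputable instance (F : FusionSystem S) (P : Subgroup S) : Group (OutF F P) :=
  letI := innRange_subgroupOf_normal F P
  QuotientGroup.Quotient.group _

/-- A strongly `p`-embedded subgroup: a proper subgroup `H < Γ` such that `p` divides
`|H|` and `p` does not divide `|H ∩ gHg⁻¹|` for every `g ∉ H`. -/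
def IsStronglyPEmbedded (p : ℕ) {Γ : Type*} [Group Γ] (H : Subgroup Γ) : Prop :=
  H ≠ ⊤ ∧ p ∣ Nat.card ↥H ∧
    ∀ g : Γ, g ∉ H → ¬ p ∣ Nat.card ↥(H ⊓ H.map (MulAut.conj g).toMonoidHom)

/-- `R` is `F`-essential: `R` is fully normalized, `F`-centric, and `Out_F(R)`
contains a strongly `p`-embedded subgroup. -/
def IsEssential (p : ℕ) (F : FusionSystem S) (R : Subgroup S) : Prop :=
  F.FullyNormalized R ∧ F.Centric R ∧
    ∃ H : Subgroup (OutF F R), IsStronglyPEmbedded p H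

/-- The Burnside ring `B(F)` of a fusion system: the subring of `B(S)` of elements
whose marks agree on `F`-conjugate subgroups. -/
noncomputable def FusionSystem.burnside (F : FusionSystem S) : Subring (Subgroup S → ℤ) where
  carrier := {b | b ∈ burnsideRing S ∧ ∀ P Q : Subgroup S, F.SubConj P Q → b P = b Q}
  zero_mem' := ⟨zero_mem _, fun _ _ _ => rfl⟩
  one_mem' := ⟨one_mem _, fun _ _ _ => rfl⟩
  add_mem' := fun ha hb => ⟨add_mem ha.1 hb.1, fun P Q h => by
    simp only [Pi.add_apply, ha.2 P Q h, hb.2 P Q h]⟩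
  mul_mem' := fun ha hb => ⟨mul_mem ha.1 hb.1, fun P Q h => by
    simp only [Pi.mul_apply, ha.2 P Q h, hb.2 P Q h]⟩
  neg_mem' := fun ha => ⟨neg_mem ha.1, fun P Q h => by
    simp only [Pi.neg_apply, ha.2 P Q h]⟩

/-- The unit group `B(F)^×` of the Burnside ring of a fusion system, as a set. -/
noncomputable def FusionSystem.burnsideUnits (F : FusionSystem S) : Set (Subgroup S → ℤ) :=
  {b | b ∈ F.burnside ∧ b * b = 1}

/-- `F`-conjugacy as an equivalence relation on the subgroups of `S`. -/
def fconjSetoid (F : FusionSystem S) : Setoid (Subgroup S) where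
  r := F.SubConj
  iseqv := by
    constructor
    · intro P
      refine ⟨conjMap 1 P P (fun x hx => by simpa using hx), F.conj_mem _ _ _ _, ?_⟩
      intro y; exact ⟨y, by ext; simp [conjMap]⟩
    · rintro P Q ⟨f, hf, hsurj⟩
      have hbij : Function.Bijective ⇑f := ⟨F.inj hf, hsurj⟩
      have he : (MulEquiv.ofBijective f hbij).toMonoidHom ∈ F.Hom P Q := by
        have : (MulEquiv.ofBijective f hbij).toMonoidHom = f := by ext x; rfl
        rwa [this]
      exact ⟨(MulEquiv.ofBijective f hbij).symm.toMonoidHom, F.isoinv_mem _ he,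
        (MulEquiv.ofBijective f hbij).symm.surjective⟩
    · rintro P Q R ⟨f, hf, hfs⟩ ⟨g, hg, hgs⟩
      exact ⟨g.comp f, F.comp_mem hf hg, hgs.comp hfs⟩

open Classical in
/-- The unit `v_M ∈ B(S)^×` attached to a maximal subgroup `M < S`:
its mark at `P` is `-1` if `P ≤ M` and `+1` otherwise. -/
noncomputable def vUnit (S : Type*) [Group S] (M : Subgroup S) : Subgroup S → ℤ :=
  fun P => if P ≤ M then -1 else 1

end BurnsideFusion

namespace BurnsideFusion

variable {G : Type*} [Group G]

/-- `S` is a Sylow `p`-subgroup of `G`. -/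
def IsSylow (p : ℕ) (S : Subgroup G) : Prop :=
  IsPGroup p ↥S ∧ ¬ p ∣ S.index

/-- `K` is a Sylow `p`-subgroup of `H` (both subgroups of an ambient group `G`). -/
def IsSylowIn (p : ℕ) (H K : Subgroup G) : Prop :=
  K ≤ H ∧ IsPGroup p ↥K ∧ ¬ p ∣ (K.subgroupOf H).index

/-- An element of the ghost ring of `S` has marks which agree on pairs of subgroups
of `S` that are conjugate by an element of `N ≤ G`.  For `N = ⊤` this is stability
for the Frobenius fusion system `F_S(G)`; for `N = N_G(S)` it is stability for
`F_S(N_G(S))`. -/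
def frobStable (S N : Subgroup G) (b : Subgroup ↥S → ℤ) : Prop :=
  ∀ P Q : Subgroup ↥S,
    (∃ g ∈ N, (P.map S.subtype).map (MulAut.conj g).toMonoidHom = Q.map S.subtype) →
    b P = b Q

/-- The Burnside ring `B(F_S(N))` of the fusion system on `S` induced by a subgroup
`N` of `G` containing `S`, as a subset of `B(S)`. -/
noncomputable def frobBurnside (S N : Subgroup G) : Set (Subgroup ↥S → ℤ) :=
  {b | b ∈ burnsideRing ↥S ∧ frobStable S N b}

/-- The unit group `B(F_S(N))^×`, as a set. -/
noncomputable def frobUnits (S N : Subgroup G) : Set (Subgroup ↥S → ℤ) :=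
  {b | b ∈ frobBurnside S N ∧ b * b = 1}

/-- Restriction `B(N) → B(S)` for `S ≤ N ≤ G`, on marks. -/
def resMark₂ (S N : Subgroup G) (b : Subgroup ↥N → ℤ) : Subgroup ↥S → ℤ :=
  fun P => b ((P.map S.subtype).subgroupOf N)

/-- Tensor induction `B(Ten^G_S) : B(S)^× → B(G)^×`, on marks: the mark of
`Ten^G_S b` at `H ≤ G` is the product over the double cosets `HgS` of the marks
`b_{(g⁻¹Hg ∩ S)}`. -/
noncomputable def tenInd (S : Subgroup G) (b : Subgroup ↥S → ℤ) : Subgroup G → ℤ :=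
  fun H => ∏ᶠ c : DoubleCoset.Quotient (H : Set G) (S : Set G),
    b ((H.comap (MulAut.conj (Quotient.out c)).toMonoidHom).subgroupOf S)

/-- `Aut_G(S)`: the automorphisms of `S ≤ G` induced by conjugation by elements
of `G` (as a set). -/
def autGSet (S : Subgroup G) : Set (MulAut ↥S) :=
  {α | ∃ g : G, ∀ x : ↥S, ((α x : ↥S) : G) = g * (x : G) * g⁻¹}

end BurnsideFusion

namespace BurnsideFusion

section ChunkA

instance finiteMulAut (G : Type*) [Group G] [Finite G] : Finite (MulAut G) :=
  Finite.of_injective (fun e => (e : G → G)) (fun a b h => by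
    ext x; exact congrFun h x)

theorem subgroup_eq_of_le_of_card_le {G : Type*} [Group G] [Finite G] {H K : Subgroup G}
    (h : H ≤ K) (hc : Nat.card K ≤ Nat.card H) : H = K := by
  have hcard : Nat.card H = Nat.card K :=
    le_antisymm (Subgroup.card_le_of_le h) hc
  have hbij : Function.Bijective (Subgroup.inclusion h) :=
    (Nat.bijective_iff_injective_and_card _).mpr ⟨Subgroup.inclusion_injective h, hcard⟩
  refine le_antisymm h fun x hx => ?_
  obtain ⟨y, hy⟩ := hbij.2 ⟨x, hx⟩
  have : (y : G) = x := by
    have := congrArg (Subtype.val) hy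
    simpa using this
  exact this ▸ y.2

theorem subgroup_card_lt {G : Type*} [Group G] [Finite G] {H K : Subgroup G}
    (h : H ≤ K) (hne : H ≠ K) : Nat.card H < Nat.card K := by
  rcases lt_or_ge (Nat.card H) (Nat.card K) with h1 | h1
  · exact h1
  · exact absurd (subgroup_eq_of_le_of_card_le h h1) hne

theorem exists_normalizing {G : Type*} [Group G] [Finite G] {L K : Subgroup G}
    (hp : IsPGroup 2 K) (hLK : L ≤ K) (hne : L ≠ K) :
    ∃ x : G, x ∈ K ∧ x ∉ L ∧ x ∈ (Subgroup.normalizer (L : Set _)) := by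
  haveI : Fact (Nat.Prime 2) := ⟨Nat.prime_two⟩
  haveI : Group.IsNilpotent ↥K := hp.isNilpotent
  have hnc : NormalizerCondition ↥K := normalizerCondition_of_isNilpotent
  have hlt : L.subgroupOf K < ⊤ := by
    rcases lt_or_eq_of_le (le_top : L.subgroupOf K ≤ ⊤) with h | h
    · exact h
    · exact absurd (le_antisymm hLK (Subgroup.subgroupOf_eq_top.mp h)) hne
  obtain ⟨x, hxn, hxL⟩ := SetLike.exists_of_lt (hnc _ hlt)
  refine ⟨(x : G), x.2, fun hx => hxL (Subgroup.mem_subgroupOf.mpr hx), ?_⟩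
  rw [Subgroup.mem_normalizer_iff]
  intro h
  constructor
  · intro hh
    have h1 : (⟨h, hLK hh⟩ : ↥K) ∈ L.subgroupOf K := Subgroup.mem_subgroupOf.mpr hh
    have h2 := (Subgroup.mem_normalizer_iff.mp hxn ⟨h, hLK hh⟩).mp h1
    have h3 := Subgroup.mem_subgroupOf.mp h2
    simpa using h3
  · intro hh
    have hyK : (x : G) * h * (x : G)⁻¹ ∈ K := hLK hh
    have hhK : h ∈ K := by
      have : h = (x : G)⁻¹ * ((x : G) * h * (x : G)⁻¹) * (x:G) := by group
      rw [this]; exact K.mul_mem (K.mul_mem (K.inv_mem x.2) hyK) x.2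
    have h1 : (x * ⟨h, hhK⟩ * x⁻¹ : ↥K) ∈ L.subgroupOf K := by
      refine Subgroup.mem_subgroupOf.mpr ?_
      simpa using hh
    have h2 := (Subgroup.mem_normalizer_iff.mp hxn ⟨h, hhK⟩).mpr h1
    exact Subgroup.mem_subgroupOf.mp h2

theorem two_dvd_card {Γ : Type*} [Group Γ] [Finite Γ] {L : Subgroup Γ}
    (h2 : IsPGroup 2 L) (hb : L ≠ ⊥) : 2 ∣ Nat.card L := by
  haveI : Fact (Nat.Prime 2) := ⟨Nat.prime_two⟩
  obtain ⟨k, hk⟩ := IsPGroup.iff_card.mp h2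
  rcases k with _ | k
  · exact absurd (Subgroup.card_eq_one.mp (by simpa using hk)) hb
  · rw [hk]; exact dvd_pow_self 2 k.succ_ne_zero

end ChunkA

section ChunkB

namespace FusionSystem

variable {S : Type*} [Group S] (F : FusionSystem S)

theorem subConj_refl (P : Subgroup S) : F.SubConj P P := (fconjSetoid F).iseqv.refl P

theorem subConj_symm {P Q : Subgroup S} (h : F.SubConj P Q) : F.SubConj Q P :=
  (fconjSetoid F).iseqv.symm h

theorem incl_mem {P Q : Subgroup S} (h : P ≤ Q) :
    ∃ f : ↥P →* ↥Q, f ∈ F.Hom P Q ∧ ∀ x (hx : x ∈ P), ((f ⟨x, hx⟩ : ↥Q) : S) = x := by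
  have h' : ∀ x ∈ P, (1 : S) * x * (1 : S)⁻¹ ∈ Q := fun x hx => by simpa using h hx
  refine ⟨conjMap 1 P Q h', F.conj_mem 1 P Q h', fun x hx => ?_⟩
  show (1 : S) * x * (1 : S)⁻¹ = x
  simp

theorem congr_mem {A B : Subgroup S} (h : A = B) :
    (MulEquiv.subgroupCongr h).toMonoidHom ∈ F.Hom A B := by
  have h' : ∀ x ∈ A, (1 : S) * x * (1 : S)⁻¹ ∈ B := fun x hx => by simpa using h ▸ hx
  have he : conjMap 1 A B h' = (MulEquiv.subgroupCongr h).toMonoidHom := by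
    refine MonoidHom.ext fun x => Subtype.ext ?_
    rw [MulEquiv.coe_toMonoidHom, MulEquiv.subgroupCongr_apply]
    show (1 : S) * x * (1 : S)⁻¹ = x
    simp
  exact he ▸ F.conj_mem 1 A B h'

theorem trans_mem {A B C : Subgroup S} {e : ↥A ≃* ↥B} {f : ↥B ≃* ↥C}
    (he : e.toMonoidHom ∈ F.Hom A B) (hf : f.toMonoidHom ∈ F.Hom B C) :
    (e.trans f).toMonoidHom ∈ F.Hom A C := by
  have h := F.comp_mem he hf
  have h2 : f.toMonoidHom.comp e.toMonoidHom = (e.trans f).toMonoidHom := rfl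
  rwa [h2] at h

theorem restrict_mem {P Q : Subgroup S} {f : ↥P →* ↥Q} (hf : f ∈ F.Hom P Q)
    {P' : Subgroup S} (hP' : P' ≤ P) :
    ∃ (R : Subgroup S) (e : ↥P' ≃* ↥R), R ≤ Q ∧ e.toMonoidHom ∈ F.Hom P' R ∧
      ∀ x (hx : x ∈ P'), ((e ⟨x, hx⟩ : ↥R) : S) = ((f ⟨x, hP' hx⟩ : ↥Q) : S) := by
  obtain ⟨ι, hι, hιval⟩ := F.incl_mem hP'
  have hg := F.comp_mem hι hf
  obtain ⟨R, hRQ, e, he, hev⟩ := F.factor_mem hg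
  refine ⟨R, e, hRQ, he, fun x hx => ?_⟩
  have h1 := hev ⟨x, hx⟩
  have h2 : ι ⟨x, hx⟩ = ⟨x, hP' hx⟩ := Subtype.ext (hιval x hx)
  rw [h1]
  show ((f (ι ⟨x, hx⟩) : ↥Q) : S) = _
  rw [h2]

theorem elemConj_of_mem {P Q : Subgroup S} {f : ↥P →* ↥Q} (hf : f ∈ F.Hom P Q)
    {x : S} (hx : x ∈ P) : F.ElemConj x ((f ⟨x, hx⟩ : ↥Q) : S) := by
  obtain ⟨R, e, hRQ, he, hev⟩ := F.restrict_mem hf (Subgroup.zpowers_le.mpr hx)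
  set y : S := ((f ⟨x, hx⟩ : ↥Q) : S) with hy
  have hxz : x ∈ Subgroup.zpowers x := Subgroup.mem_zpowers x
  have hval : ((e ⟨x, hxz⟩ : ↥R) : S) = y := hev x hxz
  have hyR : y ∈ R := hval ▸ (e ⟨x, hxz⟩).2
  have hR : R = Subgroup.zpowers y := by
    refine le_antisymm ?_ (Subgroup.zpowers_le.mpr hyR)
    intro r hr
    obtain ⟨k, hk⟩ := Subgroup.mem_zpowers_iff.mp (e.symm ⟨r, hr⟩).2
    refine Subgroup.mem_zpowers_iff.mpr ⟨k, ?_⟩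
    have h1 : (⟨x, hxz⟩ : ↥(Subgroup.zpowers x)) ^ k = e.symm ⟨r, hr⟩ := by
      refine Subtype.ext ?_
      rw [SubgroupClass.coe_zpow]
      exact hk
    have h2 : e ((⟨x, hxz⟩ : ↥(Subgroup.zpowers x)) ^ k) = ⟨r, hr⟩ := by
      rw [h1, MulEquiv.apply_symm_apply]
    calc y ^ k = ((e ⟨x, hxz⟩ : ↥R) : S) ^ k := by rw [hval]
      _ = ((e ((⟨x, hxz⟩ : ↥(Subgroup.zpowers x)) ^ k) : ↥R) : S) := by
            rw [map_zpow, SubgroupClass.coe_zpow]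
      _ = r := by rw [h2]
  subst hR
  exact ⟨e.toMonoidHom, he, Subtype.ext hval⟩

theorem mem_M_map {M : Subgroup S} (hsc : F.StronglyClosed M) {P Q : Subgroup S}
    {f : ↥P →* ↥Q} (hf : f ∈ F.Hom P Q) (x : ↥P) (hxM : (x : S) ∈ M) :
    ((f x : ↥Q) : S) ∈ M :=
  hsc _ hxM _ (F.elemConj_of_mem hf x.2)

theorem mem_M_iff {M : Subgroup S} (hsc : F.StronglyClosed M) {P Q : Subgroup S}
    {e : ↥P ≃* ↥Q} (he : e.toMonoidHom ∈ F.Hom P Q) (x : ↥P) :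
    (x : S) ∈ M ↔ ((e x : ↥Q) : S) ∈ M := by
  constructor
  · intro h
    exact F.mem_M_map hsc he x h
  · intro h
    have h2 := F.mem_M_map hsc (F.isoinv_mem e he) (e x) h
    simpa using h2

theorem sc_of_stable {M : Subgroup S}
    (hst : ∀ P Q : Subgroup S, F.SubConj P Q → vUnit S M P = vUnit S M Q) :
    F.StronglyClosed M := by
  intro x hx y hconj
  obtain ⟨f, hf, hfx⟩ := hconj
  have hsurj : Function.Surjective f := by
    rintro ⟨z, hz⟩
    obtain ⟨k, hk⟩ := Subgroup.mem_zpowers_iff.mp hz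
    refine ⟨⟨x, Subgroup.mem_zpowers x⟩ ^ k, ?_⟩
    rw [map_zpow, hfx]
    refine Subtype.ext ?_
    rw [SubgroupClass.coe_zpow]
    exact hk
  have hsc := hst _ _ ⟨f, hf, hsurj⟩
  have hxM : Subgroup.zpowers x ≤ M := Subgroup.zpowers_le.mpr hx
  by_cases h : Subgroup.zpowers y ≤ M
  · exact h (Subgroup.mem_zpowers y)
  · rw [vUnit, vUnit] at hsc
    rw [if_pos hxM, if_neg h] at hsc
    norm_num at hsc

theorem normal_of_sc {M : Subgroup S} (hsc : F.StronglyClosed M) : M.Normal := by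
  constructor
  intro n hn g
  have h : ∀ z ∈ Subgroup.zpowers n, g * z * g⁻¹ ∈ Subgroup.zpowers (g * n * g⁻¹) := by
    intro z hz
    obtain ⟨k, hk⟩ := Subgroup.mem_zpowers_iff.mp hz
    refine Subgroup.mem_zpowers_iff.mpr ⟨k, ?_⟩
    rw [← hk, conj_zpow]
  exact hsc n hn _ ⟨conjMap g _ _ h, F.conj_mem _ _ _ h, Subtype.ext rfl⟩

end FusionSystem

end ChunkB

section ChunkC

namespace FusionSystem

variable {S : Type*} [Group S] (F : FusionSystem S)

theorem mem_AutF {P : Subgroup S} {α : MulAut ↥P} :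
    α ∈ F.AutF P ↔ α.toMonoidHom ∈ F.Hom P P := Iff.rfl

/-- The subgroup of `Aut_F(Q)` acting trivially on `Q ∩ M` and on `Q/(Q ∩ M)`. -/
def stabK (M Q : Subgroup S) : Subgroup ↥(F.AutF Q) where
  carrier := {k | (∀ x : ↥Q, (x : S) ∈ M → ((k : MulAut ↥Q)) x = x) ∧
      ∀ x : ↥Q, ((((k : MulAut ↥Q)) x * x⁻¹ : ↥Q) : S) ∈ M}
  one_mem' := by
    constructor
    · intro x _; rfl
    · intro x
      show (((1 : MulAut ↥Q) x * x⁻¹ : ↥Q) : S) ∈ M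
      simpa using M.one_mem
  mul_mem' := by
    rintro a b ⟨ha1, ha2⟩ ⟨hb1, hb2⟩
    constructor
    · intro x hx
      show (a : MulAut ↥Q) ((b : MulAut ↥Q) x) = x
      rw [hb1 x hx, ha1 x hx]
    · intro x
      show ((((a : MulAut ↥Q)) ((b : MulAut ↥Q) x) * x⁻¹ : ↥Q) : S) ∈ M
      set y := (b : MulAut ↥Q) x with hy
      have heq : ((a : MulAut ↥Q)) y * x⁻¹ = (((a : MulAut ↥Q)) y * y⁻¹) * (y * x⁻¹) := by
        group
      rw [heq]
      push_cast
      exact M.mul_mem (ha2 y) (hb2 x)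
  inv_mem' := by
    rintro a ⟨ha1, ha2⟩
    constructor
    · intro x hx
      show (a : MulAut ↥Q)⁻¹ x = x
      have h1 : (a : MulAut ↥Q) x = x := ha1 x hx
      calc (a : MulAut ↥Q)⁻¹ x = (a : MulAut ↥Q)⁻¹ ((a : MulAut ↥Q) x) := by rw [h1]
        _ = x := by rw [MulAut.inv_def, MulEquiv.symm_apply_apply]
    · intro x
      show ((((a : MulAut ↥Q))⁻¹ x * x⁻¹ : ↥Q) : S) ∈ M
      set y := ((a : MulAut ↥Q))⁻¹ x with hy
      have hay : (a : MulAut ↥Q) y = x := by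
        rw [hy, MulAut.inv_def, MulEquiv.apply_symm_apply]
      have h2 := M.inv_mem (ha2 y)
      rw [hay] at h2
      have h4 : (((x * y⁻¹ : ↥Q) : S))⁻¹ = ((y * x⁻¹ : ↥Q) : S) := by
        push_cast
        group
      rw [← h4]
      push_cast at h2 ⊢
      exact h2

theorem mem_stabK {M Q : Subgroup S} (k : ↥(F.AutF Q)) :
    k ∈ F.stabK M Q ↔
      ((∀ x : ↥Q, (x : S) ∈ M → ((k : MulAut ↥Q)) x = x) ∧
        ∀ x : ↥Q, ((((k : MulAut ↥Q)) x * x⁻¹ : ↥Q) : S) ∈ M) := Iff.rfl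

theorem stabK_normal {M Q : Subgroup S} (hsc : F.StronglyClosed M) :
    (F.stabK M Q).Normal := by
  constructor
  intro k hk γ
  rw [F.mem_stabK] at hk ⊢
  obtain ⟨hk1, hk2⟩ := hk
  have hγmem : ((γ : MulAut ↥Q)).toMonoidHom ∈ F.Hom Q Q := γ.2
  have hcoe : ((γ * k * γ⁻¹ : ↥(F.AutF Q)) : MulAut ↥Q)
      = (γ : MulAut ↥Q) * (k : MulAut ↥Q) * (γ : MulAut ↥Q)⁻¹ := rfl
  rw [hcoe]
  constructor
  · intro x hx
    show (γ : MulAut ↥Q) ((k : MulAut ↥Q) ((γ : MulAut ↥Q)⁻¹ x)) = x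
    have hyM : (((γ : MulAut ↥Q)⁻¹ x : ↥Q) : S) ∈ M := by
      rw [MulAut.inv_def]
      have h5 := F.mem_M_iff hsc hγmem (((γ : MulAut ↥Q) : ↥Q ≃* ↥Q).symm x)
      rw [MulEquiv.apply_symm_apply] at h5
      exact h5.mpr hx
    rw [hk1 _ hyM, MulAut.inv_def, MulEquiv.apply_symm_apply]
  · intro x
    set y := (γ : MulAut ↥Q)⁻¹ x with hy
    have hγy : (γ : MulAut ↥Q) y = x := by
      rw [hy, MulAut.inv_def, MulEquiv.apply_symm_apply]
    show ((((γ : MulAut ↥Q)) ((k : MulAut ↥Q) y) * x⁻¹ : ↥Q) : S) ∈ M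
    have heq : ((γ : MulAut ↥Q)) ((k : MulAut ↥Q) y) * x⁻¹
        = (γ : MulAut ↥Q) ((k : MulAut ↥Q) y * y⁻¹) := by
      rw [map_mul, map_inv, hγy]
    rw [heq]
    exact F.mem_M_map hsc hγmem _ (hk2 y)

theorem stabK_pgroup [Finite S] (hS : IsPGroup 2 S) {M Q : Subgroup S} :
    IsPGroup 2 ↥(F.stabK M Q) := by
  haveI : Fact (Nat.Prime 2) := ⟨Nat.prime_two⟩
  obtain ⟨n, hn⟩ := IsPGroup.iff_card.mp hS
  have hthm : ∀ (α : MulAut ↥Q), (∀ x : ↥Q, (x : S) ∈ M → α x = x) →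
      (∀ x : ↥Q, ((α x * x⁻¹ : ↥Q) : S) ∈ M) →
      ∀ (j : ℕ) (x : ↥Q), (α ^ j) x = (α x * x⁻¹) ^ j * x := by
    intro α h1 h2 j
    induction j with
    | zero => intro x; simp
    | succ j ih =>
      intro x
      rw [pow_succ']
      show α ((α ^ j) x) = (α x * x⁻¹) ^ (j + 1) * x
      rw [ih x, map_mul, map_pow]
      have hfx : α (α x * x⁻¹) = α x * x⁻¹ := h1 _ (h2 x)
      rw [hfx, pow_succ, mul_assoc]
      congr 1
      group
  intro k
  refine ⟨n, ?_⟩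
  have hk := k.2
  rw [F.mem_stabK] at hk
  obtain ⟨hk1, hk2⟩ := hk
  set α := ((k : ↥(F.AutF Q)) : MulAut ↥Q) with hα
  have hMA : α ^ (2 ^ n) = 1 := by
    apply MulEquiv.ext
    intro x
    rw [hthm α hk1 hk2 (2 ^ n) x]
    have h1 : ((α x * x⁻¹ : ↥Q)) ^ (2 ^ n) = 1 := by
      have h6 := pow_card_eq_one' (G := S) (x := ((α x * x⁻¹ : ↥Q) : S))
      rw [hn] at h6
      refine Subtype.ext ?_
      push_cast
      exact h6
    rw [h1, one_mul]
    rfl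
  apply Subtype.ext
  apply Subtype.ext
  push_cast
  exact hMA

theorem theta_in_autS [Finite S] (hS : IsPGroup 2 S) {M : Subgroup S}
    (hsc : F.StronglyClosed M) {Q : Subgroup S} (hFA : F.FullyAutomized 2 Q)
    (δ : MulAut ↥Q) (hδF : δ.toMonoidHom ∈ F.Hom Q Q)
    (hfix : ∀ x : ↥Q, (x : S) ∈ M → δ x = x)
    (hmod : ∀ x : ↥Q, ((δ x * x⁻¹ : ↥Q) : S) ∈ M) :
    ∃ s : S, s ∈ (Subgroup.normalizer (Q : Set _)) ∧ ∀ x : ↥Q, ((δ x : ↥Q) : S) = s * (x : S) * s⁻¹ := by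
  haveI : Fact (Nat.Prime 2) := ⟨Nat.prime_two⟩
  set K : Subgroup ↥(F.AutF Q) := F.stabK M Q with hKdef
  have hKn : K.Normal := F.stabK_normal hsc
  have hK2 : IsPGroup 2 ↥K := F.stabK_pgroup hS
  obtain ⟨hle, hP2, hPidx⟩ := hFA
  haveI := hKn
  have hG2 : IsPGroup 2 ↥(K ⊔ (AutS Q).subgroupOf (F.AutF Q)) :=
    IsPGroup.to_sup_of_normal_left hK2 hP2
  set P : Subgroup ↥(F.AutF Q) := (AutS Q).subgroupOf (F.AutF Q) with hPdef
  have hrel : (P.subgroupOf (K ⊔ P)).index ∣ P.index := by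
    have h7 := Subgroup.relIndex_mul_index (le_sup_right : P ≤ K ⊔ P)
    exact ⟨(K ⊔ P).index, h7.symm⟩
  have hodd : ¬ 2 ∣ (P.subgroupOf (K ⊔ P)).index := fun h => hPidx (h.trans hrel)
  obtain ⟨m, hm⟩ := IsPGroup.iff_card.mp hG2
  have hdvd : (P.subgroupOf (K ⊔ P)).index ∣ 2 ^ m := by
    rw [← hm]; exact Subgroup.index_dvd_card _
  have hcop : Nat.Coprime ((P.subgroupOf (K ⊔ P)).index) (2 ^ m) :=
    Nat.Coprime.pow_right _ (Nat.coprime_comm.mp ((Nat.prime_two.coprime_iff_not_dvd).mpr hodd))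
  have hone : (P.subgroupOf (K ⊔ P)).index = 1 := Nat.Coprime.eq_one_of_dvd hcop hdvd
  have htop := Subgroup.index_eq_one.mp hone
  have hKP : K ≤ P := le_sup_left.trans (Subgroup.subgroupOf_eq_top.mp htop)
  have hδmem : (⟨δ, hδF⟩ : ↥(F.AutF Q)) ∈ K := by rw [hKdef, F.mem_stabK]; exact ⟨hfix, hmod⟩
  have hδP := hKP hδmem
  have hδ2 : δ ∈ AutS Q := hδP
  obtain ⟨s, hs⟩ := MonoidHom.mem_range.mp hδ2
  refine ⟨(s : S), s.2, fun x => ?_⟩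
  rw [← hs]
  rfl

end FusionSystem

end ChunkC

section ChunkD
open scoped Pointwise

namespace FusionSystem

variable {S : Type*} [Group S] (F : FusionSystem S)

theorem one_step [Finite S] (hS : IsPGroup 2 S) {M : Subgroup S}
    (habel : ∀ x ∈ M, ∀ y ∈ M, x * y = y * x) (hsc : F.StronglyClosed M)
    {Q Q'' : Subgroup S} (θ : ↥Q ≃* ↥Q'') (hθ : θ.toMonoidHom ∈ F.Hom Q Q'')
    (hFA : F.FullyAutomized 2 Q'') (hRec : F.Receptive Q'') (hMQ : ¬ M ≤ Q) :
    ∃ (Q₁ R₁ : Subgroup S) (e₁ : ↥Q₁ ≃* ↥R₁),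
      Q < Q₁ ∧ Q₁ ≤ Q ⊔ M ∧ e₁.toMonoidHom ∈ F.Hom Q₁ R₁ ∧
      Q'' ≤ R₁ ∧ R₁ ≤ Q'' ⊔ M ∧
      ∀ x (hx : x ∈ Q) (hx₁ : x ∈ Q₁),
        ((e₁ ⟨x, hx₁⟩ : ↥R₁) : S) = ((θ ⟨x, hx⟩ : ↥Q'') : S) := by
  haveI hMn : M.Normal := F.normal_of_sc hsc
  -- elements of Q are in N_θ
  have hQsub : ∀ g (hg : g ∈ Q), g ∈ NphiSet Q Q'' θ := by
    intro g hg
    refine ⟨Subgroup.le_normalizer hg, ((θ ⟨g, hg⟩ : ↥Q'') : S), ?_⟩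
    intro x hx
    have h1 : (⟨g * x * g⁻¹, (Subgroup.mem_normalizer_iff.mp (Subgroup.le_normalizer hg) x).mp hx⟩
        : ↥Q) = ⟨g, hg⟩ * ⟨x, hx⟩ * ⟨g, hg⟩⁻¹ := by
      apply Subtype.ext
      rfl
    rw [h1, map_mul, map_mul, map_inv]
    push_cast
    rfl
  -- elements of M ∩ N_S(Q) are in N_θ
  have hMsub : ∀ m (hm : m ∈ M ⊓ (Subgroup.normalizer (Q : Set _))), m ∈ NphiSet Q Q'' θ := by
    rintro m ⟨hmM, hmN⟩
    set cm : ↥Q ≃* ↥Q := conjAut Q ⟨m, hmN⟩ with hcm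
    have hcmP : ∀ z : ↥Q, ((cm z : ↥Q) : S) = m * (z : S) * m⁻¹ := fun z => rfl
    have hcmmem : cm.toMonoidHom ∈ F.Hom Q Q := by
      have h' : ∀ x ∈ Q, m * x * m⁻¹ ∈ Q :=
        fun x hx => (Subgroup.mem_normalizer_iff.mp hmN x).mp hx
      have he : conjMap m Q Q h' = cm.toMonoidHom := by
        refine MonoidHom.ext fun x => Subtype.ext ?_
        rfl
      exact he ▸ F.conj_mem m Q Q h'
    set δ : MulAut ↥Q'' := (θ.symm.trans cm).trans θ with hδ
    have hδap : ∀ z : ↥Q, δ (θ z) = θ (cm z) := by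
      intro z
      show θ (cm (θ.symm (θ z))) = θ (cm z)
      rw [MulEquiv.symm_apply_apply]
    have hδmem : δ.toMonoidHom ∈ F.Hom Q'' Q'' := by
      have h1 := F.comp_mem (F.comp_mem (F.isoinv_mem θ hθ) hcmmem) hθ
      have h2 : θ.toMonoidHom.comp (cm.toMonoidHom.comp θ.symm.toMonoidHom)
          = δ.toMonoidHom := rfl
      rwa [h2] at h1
    have hfix : ∀ x : ↥Q'', (x : S) ∈ M → δ x = x := by
      intro x hxM
      have hyM : ((θ.symm x : ↥Q) : S) ∈ M := by
        have h5 := F.mem_M_iff hsc hθ (θ.symm x)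
        rw [MulEquiv.apply_symm_apply] at h5
        exact h5.mpr hxM
      have hcmfix : cm (θ.symm x) = θ.symm x := by
        apply Subtype.ext
        rw [hcmP]
        have := habel m hmM _ hyM
        rw [this]
        group
      show θ (cm (θ.symm x)) = x
      rw [hcmfix, MulEquiv.apply_symm_apply]
    have hmod : ∀ x : ↥Q'', ((δ x * x⁻¹ : ↥Q'') : S) ∈ M := by
      intro x
      set y := θ.symm x with hy
      have h1 : δ x * x⁻¹ = θ (cm y * y⁻¹) := by
        have hθy : θ y = x := by rw [hy, MulEquiv.apply_symm_apply]
        rw [map_mul, map_inv, hθy]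
        rfl
      rw [h1]
      have h2 : ((cm y * y⁻¹ : ↥Q) : S) ∈ M := by
        push_cast
        rw [hcmP]
        have h3 : (y : S) * m⁻¹ * (y : S)⁻¹ ∈ M := hMn.conj_mem m⁻¹ (M.inv_mem hmM) (y : S)
        have h4 : m * (y:S) * m⁻¹ * (y:S)⁻¹ = m * ((y:S) * m⁻¹ * (y:S)⁻¹) := by group
        rw [h4]
        exact M.mul_mem hmM h3
      exact F.mem_M_map hsc hθ _ h2
    obtain ⟨s, hsN, hsval⟩ := F.theta_in_autS hS hsc hFA δ hδmem hfix hmod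
    refine ⟨hmN, s, ?_⟩
    intro x hx
    have h6 : (⟨m * x * m⁻¹, (Subgroup.mem_normalizer_iff.mp hmN x).mp hx⟩ : ↥Q)
        = cm ⟨x, hx⟩ := by
      apply Subtype.ext
      rfl
    rw [h6, ← hδap ⟨x, hx⟩]
    exact hsval (θ ⟨x, hx⟩)
  -- receptivity
  obtain ⟨T, hT, ψT, hψT, hval⟩ := hRec Q θ hθ
  have hmemT : ∀ g, g ∈ NphiSet Q Q'' θ → g ∈ T := by
    intro g hg
    have : g ∈ (T : Set S) := by rw [hT]; exact hg
    exact this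
  set Q₁ : Subgroup S := Q ⊔ (M ⊓ (Subgroup.normalizer (Q : Set _))) with hQ₁
  have hQT : Q ≤ T := fun g hg => hmemT g (hQsub g hg)
  have hQ₁T : Q₁ ≤ T := sup_le hQT (fun m hm => hmemT m (hMsub m hm))
  obtain ⟨R₁, e₁, _, he₁, he₁val⟩ := F.restrict_mem hψT hQ₁T
  have hQQ₁ : Q ≤ Q₁ := le_sup_left
  have hvalQ : ∀ x (hx : x ∈ Q) (hx₁ : x ∈ Q₁),
      ((e₁ ⟨x, hx₁⟩ : ↥R₁) : S) = ((θ ⟨x, hx⟩ : ↥Q'') : S) := by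
    intro x hx hx₁
    rw [he₁val x hx₁]
    exact hval x hx (hQ₁T hx₁)
  -- strictness
  have hQne : Q ≠ Q ⊔ M := by
    intro h
    exact hMQ (h ▸ le_sup_right)
  obtain ⟨a, haQM, haQ, haN⟩ :=
    exists_normalizing (hS.to_subgroup (Q ⊔ M)) (le_sup_left : Q ≤ Q ⊔ M) hQne
  have haQM' : a ∈ ((Q : Set S) * (M : Set S)) := by
    rw [← Subgroup.mul_normal]
    exact haQM
  obtain ⟨q, hq, mm, hmm, hqmm⟩ := haQM'
  have hqmm' : q * mm = a := hqmm
  have hqQ : q ∈ Q := hq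
  have hmmM : mm ∈ M := hmm
  have hmmN : mm ∈ (Subgroup.normalizer (Q : Set _)) := by
    have h1 : q⁻¹ * a ∈ (Subgroup.normalizer (Q : Set _)) :=
      ((Subgroup.normalizer (Q : Set S)).mul_mem ((Subgroup.normalizer (Q : Set S)).inv_mem (Subgroup.le_normalizer hqQ)) haN)
    have h2 : mm = q⁻¹ * a := by rw [← hqmm']; group
    rw [h2]
    exact h1
  have hmmQ : mm ∉ Q := by
    intro h
    exact haQ (hqmm' ▸ Q.mul_mem hqQ h)
  have hlt : Q < Q₁ := by
    refine lt_of_le_of_ne hQQ₁ ?_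
    intro h
    apply hmmQ
    have : mm ∈ Q₁ := Subgroup.mem_sup_right (⟨hmmM, hmmN⟩ : mm ∈ M ⊓ (Subgroup.normalizer (Q : Set _)))
    rwa [← h] at this
  have hQ₁QM : Q₁ ≤ Q ⊔ M := sup_le le_sup_left (inf_le_left.trans le_sup_right)
  -- Q'' ≤ R₁
  have hQ''R₁ : Q'' ≤ R₁ := by
    intro z hz
    set w := θ.symm ⟨z, hz⟩ with hw
    have h1 : ((e₁ ⟨(w : S), hQQ₁ w.2⟩ : ↥R₁) : S) = z := by
      rw [hvalQ (w : S) w.2 (hQQ₁ w.2)]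
      have : (⟨(w : S), w.2⟩ : ↥Q) = w := rfl
      rw [this, hw, MulEquiv.apply_symm_apply]
    rw [← h1]
    exact (e₁ _).2
  -- R₁ ≤ Q'' ⊔ M
  have hR₁le : R₁ ≤ Q'' ⊔ M := by
    intro r hr
    set u := e₁.symm ⟨r, hr⟩ with hu
    have hru : r = ((e₁ u : ↥R₁) : S) := by
      rw [hu, MulEquiv.apply_symm_apply]
    have huQM : (u : S) ∈ ((Q : Set S) * (M : Set S)) := by
      rw [← Subgroup.mul_normal]
      exact hQ₁QM u.2
    obtain ⟨q', hq', m', hm', hqm'⟩ := huQM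
    have hm'Q₁ : m' ∈ Q₁ := by
      have : m' = q'⁻¹ * (u : S) := by rw [← hqm']; group
      rw [this]
      exact Q₁.mul_mem (Q₁.inv_mem (hQQ₁ hq')) u.2
    have husplit : u = (⟨q', hQQ₁ hq'⟩ : ↥Q₁) * ⟨m', hm'Q₁⟩ := by
      apply Subtype.ext
      rw [← hqm']
      rfl
    have hsplit : r = ((e₁ ⟨q', hQQ₁ hq'⟩ : ↥R₁) : S) * ((e₁ ⟨m', hm'Q₁⟩ : ↥R₁) : S) := by
      rw [hru, husplit, map_mul]
      push_cast
      rfl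
    have hz1 : ((e₁ ⟨q', hQQ₁ hq'⟩ : ↥R₁) : S) ∈ Q'' := by
      rw [hvalQ q' hq' (hQQ₁ hq')]
      exact (θ ⟨q', hq'⟩).2
    have hz2 : ((e₁ ⟨m', hm'Q₁⟩ : ↥R₁) : S) ∈ M :=
      F.mem_M_map hsc he₁ ⟨m', hm'Q₁⟩ hm'
    have hrmem : r ∈ ((Q'' : Set S) * (M : Set S)) := by
      rw [hsplit]
      exact Set.mul_mem_mul hz1 hz2
    rw [← Subgroup.mul_normal] at hrmem
    exact hrmem
  exact ⟨Q₁, R₁, e₁, hlt, hQ₁QM, he₁, hQ''R₁, hR₁le, hvalQ⟩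

end FusionSystem

end ChunkD

section ChunkE

namespace FusionSystem

variable {S : Type*} [Group S] (F : FusionSystem S)

theorem M_surj [Finite S] {M : Subgroup S} (hsc : F.StronglyClosed M)
    {Q Q' : Subgroup S} (ψ : ↥Q ≃* ↥Q') (hψ : ψ.toMonoidHom ∈ F.Hom Q Q')
    (hMQ : M ≤ Q) : ∀ y ∈ M, ∃ x, ∃ hx : x ∈ M, ((ψ ⟨x, hMQ hx⟩ : ↥Q') : S) = y := by
  have hmap : ∀ m : ↥M, ((ψ ⟨(m : S), hMQ m.2⟩ : ↥Q') : S) ∈ M :=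
    fun m => F.mem_M_map hsc hψ _ m.2
  set g : ↥M → ↥M := fun m => ⟨_, hmap m⟩ with hg
  have hinj : Function.Injective g := by
    intro a b hab
    have h1 : ((g a : ↥M) : S) = ((g b : ↥M) : S) := congrArg Subtype.val hab
    have h2 : (⟨(a : S), hMQ a.2⟩ : ↥Q) = ⟨(b : S), hMQ b.2⟩ :=
      ψ.injective (Subtype.ext h1)
    have h3 := congrArg (fun z : ↥Q => (z : S)) h2
    exact Subtype.ext h3
  have hsurj := Finite.injective_iff_surjective.mp hinj
  intro y hy
  obtain ⟨m, hm⟩ := hsurj ⟨y, hy⟩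
  exact ⟨(m : S), m.2, congrArg Subtype.val hm⟩

theorem M_le_target [Finite S] {M : Subgroup S} (hsc : F.StronglyClosed M)
    {Q Q' : Subgroup S} (ψ : ↥Q ≃* ↥Q') (hψ : ψ.toMonoidHom ∈ F.Hom Q Q')
    (hMQ : M ≤ Q) : M ≤ Q' := by
  intro y hy
  obtain ⟨x, hx, hval⟩ := F.M_surj hsc ψ hψ hMQ y hy
  rw [← hval]
  exact (ψ _).2

theorem le_M_iff [Finite S] {M : Subgroup S} (hsc : F.StronglyClosed M)
    {Q Q' : Subgroup S} (ψ : ↥Q ≃* ↥Q') (hψ : ψ.toMonoidHom ∈ F.Hom Q Q') :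
    Q ≤ M ↔ Q' ≤ M := by
  constructor
  · intro h y hy
    have h1 := (F.mem_M_iff hsc hψ (ψ.symm ⟨y, hy⟩)).mp (h (ψ.symm ⟨y, hy⟩).2)
    rwa [MulEquiv.apply_symm_apply] at h1
  · intro h x hx
    have h1 := (F.mem_M_iff hsc (F.isoinv_mem ψ hψ) (ψ ⟨x, hx⟩)).mp (h (ψ ⟨x, hx⟩).2)
    rwa [MulEquiv.symm_apply_apply] at h1

theorem ext_of_le [Finite S] {M : Subgroup S} (hsc : F.StronglyClosed M)
    {Q Q' : Subgroup S} (ψ : ↥Q ≃* ↥Q') (hψ : ψ.toMonoidHom ∈ F.Hom Q Q')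
    (hMQ : M ≤ Q) :
    ∃ Ψ : ↥(Q ⊔ M) ≃* ↥(Q' ⊔ M), Ψ.toMonoidHom ∈ F.Hom (Q ⊔ M) (Q' ⊔ M) ∧
      ∀ x (hx : x ∈ Q), ((Ψ ⟨x, Subgroup.mem_sup_left hx⟩ : ↥(Q' ⊔ M)) : S)
        = ((ψ ⟨x, hx⟩ : ↥Q') : S) := by
  have hMQ' : M ≤ Q' := F.M_le_target hsc ψ hψ hMQ
  have h1 : Q ⊔ M = Q := sup_eq_left.mpr hMQ
  have h2 : Q' = Q' ⊔ M := (sup_eq_left.mpr hMQ').symm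
  refine ⟨(MulEquiv.subgroupCongr h1).trans (ψ.trans (MulEquiv.subgroupCongr h2)), ?_, ?_⟩
  · exact F.trans_mem (F.congr_mem h1) (F.trans_mem hψ (F.congr_mem h2))
  · intro x hx
    have h3 : (MulEquiv.subgroupCongr h1) ⟨x, Subgroup.mem_sup_left hx⟩ = ⟨x, hx⟩ :=
      Subtype.ext (MulEquiv.subgroupCongr_apply h1 _)
    rw [MulEquiv.trans_apply, MulEquiv.trans_apply, h3, MulEquiv.subgroupCongr_apply]

theorem main_ext [Finite S] (hS : IsPGroup 2 S) {M : Subgroup S} (hM : IsCoatom M)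
    (habel : ∀ x ∈ M, ∀ y ∈ M, x * y = y * x) (hsc : F.StronglyClosed M)
    (hF : F.IsSaturated 2) (n : ℕ) :
    ∀ (Q Q' : Subgroup S) (ψ : ↥Q ≃* ↥Q'),
      ψ.toMonoidHom ∈ F.Hom Q Q' → Nat.card ↥(Q ⊔ M) ≤ Nat.card ↥Q + n →
      ∃ Ψ : ↥(Q ⊔ M) ≃* ↥(Q' ⊔ M), Ψ.toMonoidHom ∈ F.Hom (Q ⊔ M) (Q' ⊔ M) ∧
        ∀ x (hx : x ∈ Q), ((Ψ ⟨x, Subgroup.mem_sup_left hx⟩ : ↥(Q' ⊔ M)) : S)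
          = ((ψ ⟨x, hx⟩ : ↥Q') : S) := by
  induction n with
  | zero =>
    intro Q Q' ψ hψ hcard
    by_cases hMQ : M ≤ Q
    · exact F.ext_of_le hsc ψ hψ hMQ
    · exfalso
      have h1 : Q ≠ Q ⊔ M := fun h => hMQ (h ▸ le_sup_right)
      have := subgroup_card_lt (le_sup_left : Q ≤ Q ⊔ M) h1
      omega
  | succ n ih =>
    intro Q Q' ψ hψ hcard
    by_cases hMQ : M ≤ Q
    · exact F.ext_of_le hsc ψ hψ hMQ
    have hψsymm : ψ.symm.toMonoidHom ∈ F.Hom Q' Q := F.isoinv_mem ψ hψ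
    have hMQ' : ¬ M ≤ Q' := fun h => hMQ (F.M_le_target hsc ψ.symm hψsymm h)
    obtain ⟨Q'', hconj, hFA, hRec⟩ := hF Q'
    obtain ⟨f, hf, hfsurj⟩ := hconj
    set χ : ↥Q' ≃* ↥Q'' := MulEquiv.ofBijective f ⟨F.inj hf, hfsurj⟩ with hχdef
    have hχ : χ.toMonoidHom ∈ F.Hom Q' Q'' := by
      have h0 : χ.toMonoidHom = f := rfl
      rw [h0]; exact hf
    set θ : ↥Q ≃* ↥Q'' := ψ.trans χ with hθdef
    have hθ : θ.toMonoidHom ∈ F.Hom Q Q'' := F.trans_mem hψ hχ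
    obtain ⟨Q₁, R₁, e₁, hQlt, hQ₁le, he₁, hQ''R₁, hR₁le, he₁val⟩ :=
      F.one_step hS habel hsc θ hθ hFA hRec hMQ
    obtain ⟨P₁, R₂, e₂, hQ'lt, hP₁le, he₂, hQ''R₂, hR₂le, he₂val⟩ :=
      F.one_step hS habel hsc χ hχ hFA hRec hMQ'
    have hQ₁M : Q₁ ⊔ M = Q ⊔ M :=
      le_antisymm (sup_le hQ₁le le_sup_right) (sup_le (hQlt.le.trans le_sup_left) le_sup_right)
    have hP₁M : P₁ ⊔ M = Q' ⊔ M :=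
      le_antisymm (sup_le hP₁le le_sup_right) (sup_le (hQ'lt.le.trans le_sup_left) le_sup_right)
    have hR₁M : R₁ ⊔ M = Q'' ⊔ M :=
      le_antisymm (sup_le hR₁le le_sup_right) (sup_le (hQ''R₁.trans le_sup_left) le_sup_right)
    have hR₂M : R₂ ⊔ M = Q'' ⊔ M :=
      le_antisymm (sup_le hR₂le le_sup_right) (sup_le (hQ''R₂.trans le_sup_left) le_sup_right)
    have hcQ : Nat.card ↥Q < Nat.card ↥Q₁ := subgroup_card_lt hQlt.le hQlt.ne
    have hcQ' : Nat.card ↥Q' < Nat.card ↥P₁ := subgroup_card_lt hQ'lt.le hQ'lt.ne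
    have hcQQ' : Nat.card ↥Q = Nat.card ↥Q' := Nat.card_congr ψ.toEquiv
    have hsupeq : Nat.card ↥(Q' ⊔ M) = Nat.card ↥(Q ⊔ M) := by
      by_cases hQM : Q ≤ M
      · have hQ'M : Q' ≤ M := (F.le_M_iff hsc ψ hψ).mp hQM
        rw [sup_eq_right.mpr hQM, sup_eq_right.mpr hQ'M]
      · have hQ'M : ¬ Q' ≤ M := fun h => hQM ((F.le_M_iff hsc ψ hψ).mpr h)
        have h1 : Q ⊔ M = ⊤ :=
          hM.2 _ (lt_of_le_of_ne le_sup_right (fun h => hQM (h ▸ le_sup_left)))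
        have h2 : Q' ⊔ M = ⊤ :=
          hM.2 _ (lt_of_le_of_ne le_sup_right (fun h => hQ'M (h ▸ le_sup_left)))
        rw [h1, h2]
    have hcard₁ : Nat.card ↥(Q₁ ⊔ M) ≤ Nat.card ↥Q₁ + n := by rw [hQ₁M]; omega
    have hcard₂ : Nat.card ↥(P₁ ⊔ M) ≤ Nat.card ↥P₁ + n := by rw [hP₁M, hsupeq]; omega
    obtain ⟨Ψ₁, hΨ₁, hΨ₁val⟩ := ih Q₁ R₁ e₁ he₁ hcard₁
    obtain ⟨X, hX, hXval⟩ := ih P₁ R₂ e₂ he₂ hcard₂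
    set X' : ↥(Q' ⊔ M) ≃* ↥(R₁ ⊔ M) :=
      (MulEquiv.subgroupCongr hP₁M.symm).trans
        (X.trans (MulEquiv.subgroupCongr (hR₂M.trans hR₁M.symm))) with hX'def
    have hX'mem : X'.toMonoidHom ∈ F.Hom (Q' ⊔ M) (R₁ ⊔ M) :=
      F.trans_mem (F.congr_mem _) (F.trans_mem hX (F.congr_mem _))
    set Ψ : ↥(Q ⊔ M) ≃* ↥(Q' ⊔ M) :=
      ((MulEquiv.subgroupCongr hQ₁M.symm).trans Ψ₁).trans X'.symm with hΨdef
    refine ⟨Ψ, ?_, ?_⟩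
    · exact F.trans_mem (F.trans_mem (F.congr_mem _) hΨ₁) (F.isoinv_mem X' hX'mem)
    · intro x hx
      set y : ↥Q' := ψ ⟨x, hx⟩ with hydef
      have hXy : ((X' ⟨(y : S), Subgroup.mem_sup_left y.2⟩ : ↥(R₁ ⊔ M)) : S)
          = ((χ y : ↥Q'') : S) := by
        rw [hX'def, MulEquiv.trans_apply, MulEquiv.trans_apply, MulEquiv.subgroupCongr_apply]
        have h3 : (MulEquiv.subgroupCongr hP₁M.symm) ⟨(y : S), Subgroup.mem_sup_left y.2⟩
            = ⟨(y : S), Subgroup.mem_sup_left (hQ'lt.le y.2)⟩ :=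
          Subtype.ext (MulEquiv.subgroupCongr_apply _ _)
        rw [h3, hXval (y : S) (hQ'lt.le y.2)]
        exact he₂val (y : S) y.2 (hQ'lt.le y.2)
      have hΨ₁x : ((Ψ₁ ⟨x, Subgroup.mem_sup_left (hQlt.le hx)⟩ : ↥(R₁ ⊔ M)) : S)
          = ((χ y : ↥Q'') : S) := by
        rw [hΨ₁val x (hQlt.le hx), he₁val x hx (hQlt.le hx)]
        rfl
      have h4 : (MulEquiv.subgroupCongr hQ₁M.symm) ⟨x, Subgroup.mem_sup_left hx⟩
          = ⟨x, Subgroup.mem_sup_left (hQlt.le hx)⟩ :=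
        Subtype.ext (MulEquiv.subgroupCongr_apply _ _)
      have h5 : X' ⟨(y : S), Subgroup.mem_sup_left y.2⟩
          = Ψ₁ ⟨x, Subgroup.mem_sup_left (hQlt.le hx)⟩ :=
        Subtype.ext (by rw [hXy, hΨ₁x])
      calc ((Ψ ⟨x, Subgroup.mem_sup_left hx⟩ : ↥(Q' ⊔ M)) : S)
          = ((X'.symm (Ψ₁ ⟨x, Subgroup.mem_sup_left (hQlt.le hx)⟩) : ↥(Q' ⊔ M)) : S) := by
            rw [hΨdef, MulEquiv.trans_apply, MulEquiv.trans_apply, h4]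
        _ = ((y : ↥Q') : S) := by rw [← h5, MulEquiv.symm_apply_apply]

end FusionSystem

end ChunkE

section ChunkF
open scoped Pointwise
open scoped Classical

namespace FusionSystem

variable {S : Type*} [Group S] (F : FusionSystem S)

theorem normalIn_of_sc [Finite S] (hS : IsPGroup 2 S) {M : Subgroup S} (hM : IsCoatom M)
    (habel : ∀ x ∈ M, ∀ y ∈ M, x * y = y * x) (hsc : F.StronglyClosed M)
    (hF : F.IsSaturated 2) : F.NormalIn M := by
  intro Q R φ hφ
  obtain ⟨Q₀, hQ₀R, e, he, hev⟩ := F.factor_mem hφ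
  obtain ⟨Ψ, hΨ, hΨval⟩ :=
    F.main_ext hS hM habel hsc hF (Nat.card ↥(Q ⊔ M)) Q Q₀ e he (by omega)
  obtain ⟨ι, hι, hιval⟩ :=
    F.incl_mem (sup_le (hQ₀R.trans le_sup_left) le_sup_right : Q₀ ⊔ M ≤ R ⊔ M)
  have hι' : ∀ u : ↥(Q₀ ⊔ M), ((ι u : ↥(R ⊔ M)) : S) = (u : S) := fun u => hιval (u : S) u.2
  have hco : ∀ u : ↥(Q ⊔ M), Ψ.toMonoidHom u = Ψ u := fun _ => rfl
  refine ⟨ι.comp Ψ.toMonoidHom, F.comp_mem hΨ hι, ?_, ?_, ?_⟩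
  · intro x hx
    rw [MonoidHom.comp_apply, hι' _, hco, hΨval x hx]
    exact hev ⟨x, hx⟩
  · intro x hxM
    rw [MonoidHom.comp_apply, hι' _, hco]
    exact F.mem_M_map hsc hΨ ⟨x, Subgroup.mem_sup_right hxM⟩ hxM
  · intro y hyM
    obtain ⟨x, hx, hval⟩ := F.M_surj hsc Ψ hΨ le_sup_right y hyM
    refine ⟨x, hx, ?_⟩
    rw [MonoidHom.comp_apply, hι' _, hco]
    exact hval

theorem sc_of_normalIn {M : Subgroup S} (hN : F.NormalIn M) : F.StronglyClosed M := by
  rintro x hx y ⟨f, hf, hfx⟩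
  obtain ⟨ψ, _, hval, hinto, _⟩ := hN _ _ f hf
  have h1 := hval x (Subgroup.mem_zpowers x)
  rw [hfx] at h1
  have h2 := hinto x hx
  have h3 : (⟨x, Subgroup.mem_sup_right hx⟩ : ↥(Subgroup.zpowers x ⊔ M))
      = ⟨x, Subgroup.mem_sup_left (Subgroup.mem_zpowers x)⟩ := rfl
  rw [h3, h1] at h2
  exact h2

theorem stable_of_normalIn [Finite S] {M : Subgroup S} (hN : F.NormalIn M) :
    ∀ P Q : Subgroup S, F.SubConj P Q → vUnit S M P = vUnit S M Q := by
  have hsc := F.sc_of_normalIn hN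
  rintro P Q ⟨f, hf, hsurj⟩
  set ψ : ↥P ≃* ↥Q := MulEquiv.ofBijective f ⟨F.inj hf, hsurj⟩ with hψdef
  have hψ : ψ.toMonoidHom ∈ F.Hom P Q := by
    have h0 : ψ.toMonoidHom = f := rfl
    rw [h0]; exact hf
  have hiff : P ≤ M ↔ Q ≤ M := F.le_M_iff hsc ψ hψ
  rw [vUnit, vUnit]
  by_cases h : P ≤ M
  · rw [if_pos h, if_pos (hiff.mp h)]
  · rw [if_neg h, if_neg (fun hq => h (hiff.mpr hq))]

end FusionSystem

theorem quot_card_two {S : Type*} [Group S] [Finite S] (hS : IsPGroup 2 S)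
    {M : Subgroup S} (hM : IsCoatom M) [M.Normal] : Nat.card (S ⧸ M) = 2 := by
  haveI : Fact (Nat.Prime 2) := ⟨Nat.prime_two⟩
  have hq : IsPGroup 2 (S ⧸ M) := hS.to_quotient M
  obtain ⟨x, hx⟩ : ∃ x : S, x ∉ M := by
    by_contra h
    push_neg at h
    exact hM.1 ((Subgroup.eq_top_iff' M).mpr h)
  have hq1 : (QuotientGroup.mk x : S ⧸ M) ≠ 1 := by
    simpa [QuotientGroup.eq_one_iff] using hx
  haveI : Nontrivial (S ⧸ M) := ⟨⟨QuotientGroup.mk x, 1, hq1⟩⟩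
  have hsub : ∀ T : Subgroup (S ⧸ M), T = ⊥ ∨ T = ⊤ := by
    intro T
    have hMC : M ≤ T.comap (QuotientGroup.mk' M) := by
      intro m hm
      have h1 : QuotientGroup.mk' M m = 1 := (QuotientGroup.eq_one_iff m).mpr hm
      rw [Subgroup.mem_comap, h1]
      exact T.one_mem
    rcases eq_or_lt_of_le hMC with h | h
    · left
      have h2 := congrArg (Subgroup.map (QuotientGroup.mk' M)) h
      rw [Subgroup.map_comap_eq_self_of_surjective (QuotientGroup.mk'_surjective M)] at h2
      rw [← h2]
      refine le_bot_iff.mp ?_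
      rintro z ⟨mz, hmz, rfl⟩
      have : QuotientGroup.mk' M mz = 1 := (QuotientGroup.eq_one_iff mz).mpr hmz
      simpa [this] using Subgroup.one_mem ⊥
    · right
      have h2 := hM.2 _ h
      have h3 := congrArg (Subgroup.map (QuotientGroup.mk' M)) h2
      rw [Subgroup.map_comap_eq_self_of_surjective (QuotientGroup.mk'_surjective M)] at h3
      rw [h3]
      exact Subgroup.map_top_of_surjective _ (QuotientGroup.mk'_surjective M)
  have h2dvd : 2 ∣ Nat.card (S ⧸ M) := by
    obtain ⟨n, hn⟩ := IsPGroup.iff_card.mp hq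
    rcases n with _ | n
    · exfalso
      have := Finite.one_lt_card (α := S ⧸ M)
      omega
    · rw [hn]
      exact dvd_pow_self 2 n.succ_ne_zero
  obtain ⟨g, hg⟩ := exists_prime_orderOf_dvd_card' 2 h2dvd
  have hg1 : g ≠ 1 := by
    intro h
    rw [h, orderOf_one] at hg
    norm_num at hg
  have hztop : Subgroup.zpowers g = ⊤ := by
    rcases hsub (Subgroup.zpowers g) with h | h
    · exact absurd (Subgroup.zpowers_eq_bot.mp h) hg1
    · exact h
  calc Nat.card (S ⧸ M) = Nat.card (⊤ : Subgroup (S ⧸ M)) := Subgroup.card_top.symm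
    _ = Nat.card (Subgroup.zpowers g) := by rw [hztop]
    _ = orderOf g := Nat.card_zpowers g
    _ = 2 := hg

theorem markVector_coatom {S : Type*} [Group S] [Finite S] {M : Subgroup S} [M.Normal]
    (hcard : Nat.card (S ⧸ M) = 2) (H : Subgroup S) :
    markVector S M H = if H ≤ M then 2 else 0 := by
  by_cases h : H ≤ M
  · rw [if_pos h]
    unfold markVector
    have hall : ∀ x : S ⧸ M, ∀ g : S, g ∈ H → g • x = x := by
      intro x g hg
      refine QuotientGroup.induction_on x ?_
      intro z
      show g • (QuotientGroup.mk z) = QuotientGroup.mk z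
      rw [MulAction.Quotient.smul_mk, smul_eq_mul, QuotientGroup.eq]
      have h5 : z⁻¹ * g⁻¹ * (z⁻¹)⁻¹ ∈ M := ‹M.Normal›.conj_mem g⁻¹ (M.inv_mem (h hg)) z⁻¹
      have h6 : (g * z)⁻¹ * z = z⁻¹ * g⁻¹ * (z⁻¹)⁻¹ := by group
      rw [h6]
      exact h5
    rw [Nat.card_congr (Equiv.subtypeUnivEquiv hall), hcard]
    norm_num
  · rw [if_neg h]
    obtain ⟨g, hgH, hgM⟩ := SetLike.not_le_iff_exists.mp h
    have hnofix : ∀ x : S ⧸ M, g • x ≠ x := by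
      intro x
      refine QuotientGroup.induction_on x ?_
      intro z hfix
      rw [MulAction.Quotient.smul_mk, smul_eq_mul, QuotientGroup.eq] at hfix
      have h5 : z * ((g * z)⁻¹ * z) * z⁻¹ ∈ M := ‹M.Normal›.conj_mem _ hfix z
      have h6 : z * ((g * z)⁻¹ * z) * z⁻¹ = g⁻¹ := by group
      rw [h6] at h5
      exact hgM (by simpa using M.inv_mem h5)
    haveI : IsEmpty {x : S ⧸ M // ∀ h : S, h ∈ H → h • x = x} :=
      ⟨fun p => hnofix p.1 (p.2 g hgH)⟩
    unfold markVector
    rw [Nat.card_of_isEmpty]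
    norm_num

theorem vUnit_eq_sub {S : Type*} [Group S] [Finite S] {M : Subgroup S} [M.Normal]
    (hcard : Nat.card (S ⧸ M) = 2) :
    vUnit S M = 1 - markVector S M := by
  funext P
  rw [Pi.sub_apply, Pi.one_apply, markVector_coatom hcard P, vUnit]
  by_cases h : P ≤ M
  · rw [if_pos h, if_pos h]; norm_num
  · rw [if_neg h, if_neg h]; norm_num

theorem vUnit_mem_burnsideRing {S : Type*} [Group S] [Finite S] {M : Subgroup S} [M.Normal]
    (hcard : Nat.card (S ⧸ M) = 2) : vUnit S M ∈ burnsideRing S := by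
  rw [vUnit_eq_sub hcard]
  exact sub_mem (one_mem _) (Subring.subset_closure ⟨M, rfl⟩)

theorem vUnit_sq {S : Type*} [Group S] (M : Subgroup S) : vUnit S M * vUnit S M = 1 := by
  funext P
  rw [Pi.mul_apply]
  show vUnit S M P * vUnit S M P = 1
  rw [vUnit]
  by_cases h : P ≤ M
  · rw [if_pos h]; norm_num
  · rw [if_neg h]; norm_num

theorem no_normal_2sub {Γ : Type*} [Group Γ] [Finite Γ] {H K : Subgroup Γ}
    (hss : IsStronglyPEmbedded 2 H) (hKn : K.Normal) (hK2 : IsPGroup 2 K)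
    (hKbot : K ≠ ⊥) : False := by
  haveI : Fact (Nat.Prime 2) := ⟨Nat.prime_two⟩
  obtain ⟨hHtop, hHcard, hHconj⟩ := hss
  have claim1 : ∀ L : Subgroup Γ, L ≤ H → L ≠ ⊥ → IsPGroup 2 L → (Subgroup.normalizer (L : Set _)) ≤ H := by
    intro L hLH hLbot hL2 g hg
    by_contra hgH
    apply hHconj g hgH
    have hLsub : L ≤ H ⊓ Subgroup.map (MulAut.conj g).toMonoidHom H := by
      refine le_inf hLH ?_
      intro x hx
      have hx' : g⁻¹ * x * g ∈ L := by
        refine (Subgroup.mem_normalizer_iff.mp hg (g⁻¹ * x * g)).mpr ?_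
        have h0 : g * (g⁻¹ * x * g) * g⁻¹ = x := by group
        rw [h0]
        exact hx
      refine ⟨g⁻¹ * x * g, hLH hx', ?_⟩
      show g * (g⁻¹ * x * g) * g⁻¹ = x
      group
    exact (two_dvd_card hL2 hLbot).trans (Subgroup.card_dvd_of_le hLsub)
  obtain ⟨x₀, hx₀⟩ := exists_prime_orderOf_dvd_card' 2 hHcard
  have hq2 : orderOf (x₀ : Γ) = 2 := by rw [Subgroup.orderOf_coe]; exact hx₀
  have hq1 : (x₀ : Γ) ≠ 1 := by
    intro h
    rw [h, orderOf_one] at hq2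
    norm_num at hq2
  set Q₀ := Subgroup.zpowers (x₀ : Γ) with hQ₀
  have hQ₀H : Q₀ ≤ H := Subgroup.zpowers_le.mpr x₀.2
  have hQ₀2 : IsPGroup 2 Q₀ := IsPGroup.of_card (by rw [Nat.card_zpowers, hq2, pow_one])
  have hQ₀bot : Q₀ ≠ ⊥ := by
    rw [hQ₀, Ne, Subgroup.zpowers_eq_bot]
    exact hq1
  haveI := hKn
  have hG2 : IsPGroup 2 ↥(K ⊔ Q₀) := IsPGroup.to_sup_of_normal_left hK2 hQ₀2
  have key : ∀ n (L : Subgroup Γ), Q₀ ≤ L → L ≤ K ⊔ Q₀ → L ≤ H →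
      Nat.card ↥(K ⊔ Q₀) ≤ Nat.card ↥L + n → K ⊔ Q₀ ≤ H := by
    intro n
    induction n with
    | zero =>
      intro L h1 h2 h3 h4
      rwa [← subgroup_eq_of_le_of_card_le h2 (by omega)]
    | succ n ih =>
      intro L h1 h2 h3 h4
      by_cases heq : L = K ⊔ Q₀
      · rwa [← heq]
      · obtain ⟨x, hxG, hxL, hxN⟩ := exists_normalizing hG2 h2 heq
        have hLbot : L ≠ ⊥ := fun hb => hQ₀bot (le_bot_iff.mp (hb ▸ h1))
        have hxH : x ∈ H := claim1 L h3 hLbot (hG2.to_le h2) hxN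
        refine ih (L ⊔ Subgroup.zpowers x) (h1.trans le_sup_left)
          (sup_le h2 (Subgroup.zpowers_le.mpr hxG))
          (sup_le h3 (Subgroup.zpowers_le.mpr hxH)) ?_
        have hlt : Nat.card ↥L < Nat.card ↥(L ⊔ Subgroup.zpowers x) := by
          refine subgroup_card_lt le_sup_left fun h => hxL ?_
          rw [h]
          exact Subgroup.mem_sup_right (Subgroup.mem_zpowers x)
        omega
  have hKH : K ≤ H :=
    le_sup_left.trans (key (Nat.card ↥(K ⊔ Q₀)) Q₀ le_rfl le_sup_right hQ₀H (by omega))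
  obtain ⟨g, hgH⟩ : ∃ g : Γ, g ∉ H := by
    by_contra hc
    push_neg at hc
    exact hHtop ((Subgroup.eq_top_iff' H).mpr hc)
  apply hHconj g hgH
  have hKsub : K ≤ H ⊓ Subgroup.map (MulAut.conj g).toMonoidHom H := by
    refine le_inf hKH ?_
    intro x hx
    refine ⟨g⁻¹ * x * g, hKH (by simpa using hKn.conj_mem x hx g⁻¹), ?_⟩
    show g * (g⁻¹ * x * g) * g⁻¹ = x
    group
  exact (two_dvd_card hK2 hKbot).trans (Subgroup.card_dvd_of_le hKsub)

namespace FusionSystem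

variable {S : Type*} [Group S] (F : FusionSystem S)

theorem essential_eq_M [Finite S] (hS : IsPGroup 2 S) {M : Subgroup S} (hM : IsCoatom M)
    (habel : ∀ x ∈ M, ∀ y ∈ M, x * y = y * x) (hsc : F.StronglyClosed M)
    {R : Subgroup S} (hne : R ≠ ⊤) (hEss : IsEssential 2 F R) : R = M := by
  by_cases hMR : M ≤ R
  · by_contra h
    exact hne (hM.2 R (lt_of_le_of_ne hMR (fun he => h he.symm)))
  · exfalso
    obtain ⟨hFN, hCen, H, hss⟩ := hEss
    haveI hMn : M.Normal := F.normal_of_sc hsc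
    have hRRM : R ≠ R ⊔ M := fun h => hMR (le_sup_right.trans h.ge)
    obtain ⟨x, hxRM, hxR, hxN⟩ :=
      exists_normalizing (hS.to_subgroup (R ⊔ M)) (le_sup_left : R ≤ R ⊔ M) hRRM
    have hxRM' : x ∈ ((R : Set S) * (M : Set S)) := by
      rw [← Subgroup.mul_normal]
      exact hxRM
    obtain ⟨r, hr, m, hm, hrm⟩ := hxRM'
    have hrm' : r * m = x := hrm
    have hrR : r ∈ R := hr
    have hmM : m ∈ M := hm
    have hmN : m ∈ (Subgroup.normalizer (R : Set _)) := by
      have h1 : r⁻¹ * x ∈ (Subgroup.normalizer (R : Set _)) :=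
        (Subgroup.normalizer (R : Set S)).mul_mem ((Subgroup.normalizer (R : Set S)).inv_mem (Subgroup.le_normalizer hrR)) hxN
      have h2 : m = r⁻¹ * x := by rw [← hrm']; group
      rw [h2]
      exact h1
    have hmR : m ∉ R := fun h => hxR (hrm' ▸ R.mul_mem hrR h)
    set δ : MulAut ↥R := conjAut R ⟨m, hmN⟩ with hδdef
    have hδF : δ ∈ F.AutF R := by
      rw [F.mem_AutF]
      have h' : ∀ z ∈ R, m * z * m⁻¹ ∈ R :=
        fun z hz => (Subgroup.mem_normalizer_iff.mp hmN z).mp hz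
      have he : conjMap m R R h' = δ.toMonoidHom := by
        refine MonoidHom.ext fun z => Subtype.ext ?_
        rfl
      exact he ▸ F.conj_mem m R R h'
    have hδfix : ∀ z : ↥R, (z : S) ∈ M → δ z = z := by
      intro z hzM
      apply Subtype.ext
      show m * (z : S) * m⁻¹ = (z : S)
      rw [habel m hmM _ hzM]
      group
    have hδmod : ∀ z : ↥R, ((δ z * z⁻¹ : ↥R) : S) ∈ M := by
      intro z
      show m * (z : S) * m⁻¹ * (z : S)⁻¹ ∈ M
      have h3 : (z : S) * m⁻¹ * (z : S)⁻¹ ∈ M := hMn.conj_mem m⁻¹ (M.inv_mem hmM) (z : S)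
      have h4 : m * (z : S) * m⁻¹ * (z : S)⁻¹ = m * ((z : S) * m⁻¹ * (z : S)⁻¹) := by group
      rw [h4]
      exact M.mul_mem hmM h3
    have hδK : (⟨δ, hδF⟩ : ↥(F.AutF R)) ∈ F.stabK M R := ⟨hδfix, hδmod⟩
    haveI hNn := innRange_subgroupOf_normal F R
    let π : ↥(F.AutF R) →* OutF F R :=
      QuotientGroup.mk' ((MulAut.conj : ↥R →* MulAut ↥R).range.subgroupOf (F.AutF R))
    have hπsurj : Function.Surjective π := QuotientGroup.mk'_surjective _
    set Kb : Subgroup (OutF F R) := Subgroup.map π (F.stabK M R) with hKb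
    have hKbn : Kb.Normal := (F.stabK_normal hsc).map π hπsurj
    have hKb2 : IsPGroup 2 ↥Kb := (F.stabK_pgroup hS).map π
    have hKbbot : Kb ≠ ⊥ := by
      intro hb
      have hmem : π ⟨δ, hδF⟩ ∈ Kb := Subgroup.mem_map_of_mem π hδK
      rw [hb] at hmem
      have h1 : π ⟨δ, hδF⟩ = 1 := Subgroup.mem_bot.mp hmem
      have h2 : (⟨δ, hδF⟩ : ↥(F.AutF R))
          ∈ (MulAut.conj : ↥R →* MulAut ↥R).range.subgroupOf (F.AutF R) :=
        (QuotientGroup.eq_one_iff _).mp h1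
      have h3 : δ ∈ (MulAut.conj : ↥R →* MulAut ↥R).range := h2
      obtain ⟨rr, hrr⟩ := h3
      have hc : ((rr : S))⁻¹ * m ∈ Subgroup.centralizer (R : Set S) := by
        rw [Subgroup.mem_centralizer_iff]
        intro y hy
        have h4 : (MulAut.conj rr) ⟨y, hy⟩ = δ ⟨y, hy⟩ := by rw [hrr]
        have h5 : (rr : S) * y * (rr : S)⁻¹ = m * y * m⁻¹ := by
          have h4' := congrArg (fun z : ↥R => (z : S)) h4
          rw [show ((δ ⟨y, hy⟩ : ↥R) : S) = m * y * m⁻¹ from rfl] at h4'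
          simpa [MulAut.conj_apply] using h4'
        have h6 : (rr : S)⁻¹ * ((rr : S) * y * (rr : S)⁻¹) * m = (rr : S)⁻¹ * (m * y * m⁻¹) * m := by
          rw [h5]
        calc y * ((rr : S)⁻¹ * m) = (rr : S)⁻¹ * ((rr : S) * y * (rr : S)⁻¹) * m := by group
          _ = (rr : S)⁻¹ * (m * y * m⁻¹) * m := h6
          _ = ((rr : S)⁻¹ * m) * y := by group
      have h7 : ((rr : S))⁻¹ * m ∈ R := hCen R (F.subConj_refl R) hc
      have h8 : m ∈ R := by
        have h9 : m = (rr : S) * (((rr : S))⁻¹ * m) := by group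
        rw [h9]
        exact R.mul_mem rr.2 h7
      exact hmR h8
    haveI : Finite (OutF F R) := Quotient.finite _
    exact no_normal_2sub hss hKbn hKb2 hKbbot

end FusionSystem

end ChunkF

theorem statement14 {S : Type*} [Group S] [Finite S] (hS : IsPGroup 2 S)
    (F : FusionSystem S) (hF : F.IsSaturated 2) (M : Subgroup S) (hM : IsCoatom M)
    (habel : ∀ x ∈ M, ∀ y ∈ M, x * y = y * x) :
    (vUnit S M ∈ F.burnsideUnits ↔ F.NormalIn M) ∧
    (vUnit S M ∈ F.burnsideUnits →
      ∀ R : Subgroup S, R ≠ ⊤ → IsEssential 2 F R → R = M) := by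
  constructor
  · constructor
    · intro h
      have h1 : vUnit S M ∈ burnsideRing S ∧
          ∀ P Q : Subgroup S, F.SubConj P Q → vUnit S M P = vUnit S M Q := h.1
      exact F.normalIn_of_sc hS hM habel (F.sc_of_stable h1.2) hF
    · intro hN
      have hsc := F.sc_of_normalIn hN
      haveI : M.Normal := F.normal_of_sc hsc
      have hcard := quot_card_two hS hM
      exact ⟨⟨vUnit_mem_burnsideRing hcard, F.stable_of_normalIn hN⟩, vUnit_sq M⟩
  · intro h R hne hEss
    have h1 : vUnit S M ∈ burnsideRing S ∧
        ∀ P Q : Subgroup S, F.SubConj P Q → vUnit S M P = vUnit S M Q := h.1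
    exact F.essential_eq_M hS hM habel (F.sc_of_stable h1.2) hne hEss

end BurnsideFusion
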